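/- Let A ∈ ℝ^{3×3} be the matrix with A₁₂ = 1, A₃₃ = 2/5, and all other entries 0, and for t ∈ [0,1] let B(t) = (1−t)A + tAᵀ. Then the eigenvalues of B(t) are exactly {2/5, √(t(1−t)), −√(t(1−t))}; consequently ρ(B(t)) = max(2/5, √(t(1−t))), and the function t ↦ ρ(B(t)) is not concave on (0,1) (for instance, for all sufficiently small ε > 0, (ρ(B(1/5 − ε)) + ρ(B(1/5 + ε)))/2 > ρ(B(1/5)) = 2/5). -/

import Mathlib

open Matrix

/-- The spectral radius of a real square matrix: the maximum modulus of its
(complex) eigenvalues. -/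
noncomputable def specRad {m : Type*} [Fintype m] [DecidableEq m]
    (M : Matrix m m ℝ) : ℝ :=
  (spectralRadius ℂ (M.map (fun x : ℝ => (x : ℂ)))).toReal

/-- A square matrix is irreducible if its associated directed graph is strongly
connected, i.e. for every pair of indices `i j` some power of the matrix has a
positive `(i,j)` entry. -/
def Irred {m : Type*} [Fintype m] [DecidableEq m] (M : Matrix m m ℝ) : Prop :=
  ∀ i j : m, ∃ k : ℕ, 0 < (M ^ (k + 1)) i j

open Polynomial
open scoped NNReal ENNReal

lemma levAux_spectrum_eq_roots {n : Type*} [Fintype n] [DecidableEq n] (M : Matrix n n ℂ) :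
    spectrum ℂ M = {z : ℂ | M.charpoly.IsRoot z} := by
  ext z
  rw [Set.mem_setOf_eq, spectrum.mem_iff, Matrix.isUnit_iff_isUnit_det, isUnit_iff_ne_zero,
    not_not, Polynomial.IsRoot]
  have : (algebraMap ℂ (Matrix n n ℂ) z - M).det = M.charpoly.eval z := by
    rw [Matrix.charpoly, ← Polynomial.coe_evalRingHom, RingHom.map_det]
    congr 1
    ext i j
    rcases eq_or_ne i j with rfl | h
    · simp [charmatrix_apply_eq, Matrix.algebraMap_matrix_apply]
    · simp [charmatrix_apply_ne _ _ _ h, Matrix.algebraMap_matrix_apply, h]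
  rw [this]

lemma levAux_eig3 (M : Matrix (Fin 3) (Fin 3) ℝ) (d s : ℝ) (hd : 0 ≤ d) (hs : 0 ≤ s)
    (h : (M.map (fun x : ℝ => (x : ℂ))).charpoly
        = (X - C ((d : ℝ) : ℂ)) * ((X - C ((s : ℝ) : ℂ)) * (X + C ((s : ℝ) : ℂ)))) :
    ({z : ℂ | z ∈ (M.map (fun x : ℝ => (x : ℂ))).charpoly.roots} =
      {((d : ℝ) : ℂ), ((s : ℝ) : ℂ), (-(s : ℝ) : ℂ)}) ∧ specRad M = max d s := by
  have hne : ((M.map (fun x : ℝ => (x : ℂ))).charpoly) ≠ 0 :=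
    (Matrix.charpoly_monic _).ne_zero
  have hroots : {z : ℂ | z ∈ (M.map (fun x : ℝ => (x : ℂ))).charpoly.roots} =
      ({((d : ℝ) : ℂ), ((s : ℝ) : ℂ), (-(s : ℝ) : ℂ)} : Set ℂ) := by
    ext z
    rw [Set.mem_setOf_eq, Polynomial.mem_roots hne, h]
    simp only [Polynomial.IsRoot, eval_mul, eval_sub, eval_add, eval_X, eval_C, mul_eq_zero,
      sub_eq_zero, add_eq_zero_iff_eq_neg]
    constructor
    · rintro (rfl | rfl | rfl) <;> simp
    · intro hz
      rcases hz with rfl | rfl | rfl <;> simp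
  refine ⟨hroots, ?_⟩
  have hspec : spectrum ℂ (M.map (fun x : ℝ => (x : ℂ))) =
      ({((d : ℝ) : ℂ), ((s : ℝ) : ℂ), (-(s : ℝ) : ℂ)} : Set ℂ) := by
    rw [levAux_spectrum_eq_roots, ← hroots]
    ext z
    simp [Polynomial.mem_roots hne]
  rw [specRad, spectralRadius, hspec]
  have h1 : (⨆ k ∈ ({((d : ℝ) : ℂ), ((s : ℝ) : ℂ), (-(s : ℝ) : ℂ)} : Set ℂ), (‖k‖₊ : ℝ≥0∞))
      = ((max ‖((d : ℝ) : ℂ)‖₊ (max ‖((s : ℝ) : ℂ)‖₊ ‖(-(s : ℝ) : ℂ)‖₊) : ℝ≥0) : ℝ≥0∞) := by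
    rw [iSup_insert, iSup_insert, iSup_singleton]
    simp only [nnnorm_neg]
    rw [ENNReal.coe_max, ENNReal.coe_max]
  rw [h1, ENNReal.coe_toReal]
  simp [nnnorm_neg, NNReal.coe_max, coe_nnnorm, Complex.norm_real,
    Real.norm_of_nonneg hd, Real.norm_of_nonneg hs]

lemma levAux_charpoly3 (b c s d : ℂ) (hs : s ^ 2 = b * c) :
    (!![0, b, 0; c, 0, 0; 0, 0, d] : Matrix (Fin 3) (Fin 3) ℂ).charpoly
      = (X - C d) * ((X - C s) * (X + C s)) := by
  have hC : C s * C s = C b * C c := by rw [← C_mul, ← C_mul, ← sq, hs]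
  rw [Matrix.charpoly, Matrix.det_fin_three]
  simp [charmatrix_apply, Matrix.diagonal_apply, Matrix.vecHead, Matrix.vecTail, Fin.ext_iff]
  linear_combination (X - C d) * hC

/-- For the concrete `3 × 3` matrix with `A₁₂ = 1`, `A₃₃ = 2/5` and zeros
elsewhere, the eigenvalues of the Levinger homotopy `B(t)` are exactly
`{2/5, √(t(1−t)), −√(t(1−t))}`, so `ρ(B(t)) = max(2/5, √(t(1−t)))`, and
Levinger's function is not concave on `(0,1)`; in particular for all
sufficiently small `ε > 0` the midpoint inequality at `t = 1/5` fails. -/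
theorem levinger_simple_counterexample
    (A : Matrix (Fin 3) (Fin 3) ℝ)
    (hA : A = !![0, 1, 0; 0, 0, 0; 0, 0, 2/5])
    (B : ℝ → Matrix (Fin 3) (Fin 3) ℝ)
    (hB : ∀ t : ℝ, B t = (1 - t) • A + t • Aᵀ) :
    (∀ t ∈ Set.Icc (0:ℝ) 1,
      ({z : ℂ | z ∈ ((B t).map (fun x : ℝ => (x : ℂ))).charpoly.roots} =
        {((2/5 : ℝ) : ℂ), ((Real.sqrt (t * (1 - t)) : ℝ) : ℂ),
          (-(Real.sqrt (t * (1 - t))) : ℂ)} ∧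
      specRad (B t) = max (2/5) (Real.sqrt (t * (1 - t))))) ∧
    ¬ ConcaveOn ℝ (Set.Ioo (0:ℝ) 1) (fun t : ℝ => specRad (B t)) ∧
    specRad (B (1/5)) = 2/5 ∧
    ∃ ε₀ > (0:ℝ), ∀ ε ∈ Set.Ioo (0:ℝ) ε₀,
      (specRad (B (1/5 - ε)) + specRad (B (1/5 + ε))) / 2 > specRad (B (1/5)) := by
  -- the matrix B t explicitly
  have hBt : ∀ t : ℝ, B t = !![0, 1-t, 0; t, 0, 0; 0, 0, 2/5] := by
    intro t
    rw [hB, hA]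
    ext i j
    fin_cases i <;> fin_cases j <;>
      simp [Matrix.transpose_apply, Matrix.vecHead, Matrix.vecTail] <;> ring
  have hmap : ∀ t : ℝ, (B t).map (fun x : ℝ => (x : ℂ))
      = !![0, 1-(t:ℂ), 0; (t:ℂ), 0, 0; 0, 0, ((2/5 : ℝ) : ℂ)] := by
    intro t
    rw [hBt]
    ext i j
    fin_cases i <;> fin_cases j <;>
      simp [Matrix.map_apply, Matrix.vecHead, Matrix.vecTail] <;> push_cast <;> ring
  -- the main spectral computation
  have key : ∀ t ∈ Set.Icc (0:ℝ) 1,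
      ({z : ℂ | z ∈ ((B t).map (fun x : ℝ => (x : ℂ))).charpoly.roots} =
        {((2/5 : ℝ) : ℂ), ((Real.sqrt (t * (1 - t)) : ℝ) : ℂ),
          (-(Real.sqrt (t * (1 - t))) : ℂ)} ∧
      specRad (B t) = max (2/5) (Real.sqrt (t * (1 - t)))) := by
    intro t ht
    have ht0 : (0:ℝ) ≤ t * (1 - t) := mul_nonneg ht.1 (by linarith [ht.2])
    have hsq : ((Real.sqrt (t * (1 - t)) : ℝ) : ℂ) ^ 2 = (1 - (t:ℂ)) * (t:ℂ) := by
      have h2 : ((Real.sqrt (t * (1 - t)) : ℝ) : ℂ) ^ 2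
          = ((Real.sqrt (t * (1 - t)) ^ 2 : ℝ) : ℂ) := by push_cast; ring
      rw [h2, Real.sq_sqrt ht0]
      push_cast
      ring
    have hchar : ((B t).map (fun x : ℝ => (x : ℂ))).charpoly
        = (X - C (((2/5 : ℝ)) : ℂ)) * ((X - C ((Real.sqrt (t * (1 - t)) : ℝ) : ℂ)) *
            (X + C ((Real.sqrt (t * (1 - t)) : ℝ) : ℂ))) := by
      rw [hmap]
      exact levAux_charpoly3 _ _ _ _ hsq
    exact levAux_eig3 (B t) (2/5) (Real.sqrt (t * (1 - t))) (by norm_num)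
      (Real.sqrt_nonneg _) hchar
  have hval : ∀ t ∈ Set.Icc (0:ℝ) 1,
      specRad (B t) = max (2/5) (Real.sqrt (t * (1 - t))) := fun t ht => (key t ht).2
  -- value at 1/5
  have h15 : specRad (B (1/5)) = 2/5 := by
    rw [hval (1/5) (by norm_num)]
    rw [show (1/5 : ℝ) * (1 - 1/5) = (2/5)^2 by norm_num, Real.sqrt_sq (by norm_num)]
    simp
  -- midpoint inequality fails for all small ε
  have hmid : ∀ ε ∈ Set.Ioo (0:ℝ) (1/5),
      (specRad (B (1/5 - ε)) + specRad (B (1/5 + ε))) / 2 > specRad (B (1/5)) := by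
    intro ε hε
    obtain ⟨hε0, hε1⟩ := hε
    have h1 : specRad (B (1/5 - ε)) ≥ 2/5 := by
      rw [hval (1/5 - ε) (by constructor <;> nlinarith)]
      exact le_max_left _ _
    have h2 : specRad (B (1/5 + ε)) > 2/5 := by
      rw [hval (1/5 + ε) (by constructor <;> nlinarith)]
      have : Real.sqrt ((2/5)^2) < Real.sqrt ((1/5 + ε) * (1 - (1/5 + ε))) := by
        apply Real.sqrt_lt_sqrt (by positivity)
        nlinarith
      rw [Real.sqrt_sq (by norm_num)] at this
      exact lt_max_of_lt_right this
    rw [h15]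
    linarith
  refine ⟨key, ?_, h15, ⟨1/5, by norm_num, hmid⟩⟩
  -- non-concavity
  intro hc
  have hx : (1/10 : ℝ) ∈ Set.Ioo (0:ℝ) 1 := by norm_num
  have hy : (3/10 : ℝ) ∈ Set.Ioo (0:ℝ) 1 := by norm_num
  have h2 := hc.2 hx hy (by norm_num : (0:ℝ) ≤ 1/2) (by norm_num : (0:ℝ) ≤ 1/2)
    (by norm_num : (1/2 : ℝ) + 1/2 = 1)
  have harg : (1/2 : ℝ) • (1/10 : ℝ) + (1/2 : ℝ) • (3/10 : ℝ) = 1/5 := by norm_num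
  rw [harg] at h2
  have hm := hmid (1/10) (by norm_num)
  have e1 : (1/5 : ℝ) - 1/10 = 1/10 := by norm_num
  have e2 : (1/5 : ℝ) + 1/10 = 3/10 := by norm_num
  rw [e1, e2, h15] at hm
  simp only [smul_eq_mul] at h2
  rw [h15] at h2
  linarith
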